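/- Let γ > 1 be real. For the set ℕ^γ = {⌊K^γ⌋ : K ∈ ℕ} \ {0}, and for N a natural number with N - T - M(T-1) ≥ 1 where T = ⌊N^t⌋, M = ⌊N^m⌋ with 0 < t, 0 < m, m + t < 1, define N' = max{n ∈ ℕ^γ : n ≤ N - T - M(T-1)}. Then N - N' = O(N^{1-1/γ} + N^{m+t}) as N → ∞. -/

import Mathlib

set_option maxHeartbeats 1000000
open Real

/-- The set `ℕ^γ = {⌊K^γ⌋ : K ∈ ℕ} \ {0}`. -/
def NgammaSet (γ : ℝ) : Set ℕ := {n : ℕ | n ≠ 0 ∧ ∃ K : ℕ, n = ⌊(K : ℝ) ^ γ⌋₊}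

theorem N_minus_Nprime_bigO (γ t m : ℝ) (hγ : 1 < γ) (ht : 0 < t) (hm : 0 < m)
    (hmt : m + t < 1) :
    ∃ C > (0:ℝ), ∃ N₀ : ℕ, ∀ N : ℕ, N₀ ≤ N →
      1 ≤ N - ⌊(N:ℝ)^t⌋₊ - ⌊(N:ℝ)^m⌋₊ * (⌊(N:ℝ)^t⌋₊ - 1) ∧
      (N : ℝ) -
        (sSup {n ∈ NgammaSet γ |
            n ≤ N - ⌊(N:ℝ)^t⌋₊ - ⌊(N:ℝ)^m⌋₊ * (⌊(N:ℝ)^t⌋₊ - 1)} : ℕ)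
        ≤ C * ((N:ℝ) ^ (1 - 1/γ) + (N:ℝ) ^ (m + t)) := by
  have hγ0 : (0:ℝ) < γ := by linarith
  have hexp : (0:ℝ) < 1 - 1/γ := by
    have : 1/γ < 1 := by rw [div_lt_one hγ0]; linarith
    linarith
  obtain ⟨N₀, hN₀⟩ : ∃ N₀ : ℕ, ∀ N, N₀ ≤ N → (4:ℝ) ≤ (N:ℝ)^(1-(m+t)) := by
    have h := (tendsto_rpow_atTop (by linarith : (0:ℝ) < 1-(m+t))).comp
      (tendsto_natCast_atTop_atTop (R := ℝ))
    have h2 := h.eventually_ge_atTop 4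
    rw [Filter.eventually_atTop] at h2
    obtain ⟨a, ha⟩ := h2
    exact ⟨a, fun N hN => ha N hN⟩
  refine ⟨γ + 2, by linarith, N₀, fun N hN => ?_⟩
  have h4 := hN₀ N hN
  have hNpos : 0 < N := by
    rcases Nat.eq_zero_or_pos N with h | h
    · exfalso
      rw [h] at h4
      rw [Nat.cast_zero, Real.zero_rpow (by linarith : (1:ℝ)-(m+t) ≠ 0)] at h4
      norm_num at h4
    · exact h
  have hNR : (0:ℝ) < N := by exact_mod_cast hNpos
  have hN1 : (1:ℝ) ≤ N := by exact_mod_cast hNpos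
  have hPmt : (1:ℝ) ≤ (N:ℝ)^(m+t) := Real.one_le_rpow hN1 (by linarith)
  have hsplit : (N:ℝ)^(m+t) * (N:ℝ)^(1-(m+t)) = N := by
    rw [← Real.rpow_add hNR, show m+t+(1-(m+t)) = 1 by ring, Real.rpow_one]
  have h4N : 4 * (N:ℝ)^(m+t) ≤ N := by
    calc 4 * (N:ℝ)^(m+t) ≤ (N:ℝ)^(1-(m+t)) * (N:ℝ)^(m+t) :=
          mul_le_mul_of_nonneg_right h4 (by positivity)
      _ = N := by rw [mul_comm]; exact hsplit
  set T := ⌊(N:ℝ)^t⌋₊ with hTdef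
  set M := ⌊(N:ℝ)^m⌋₊ with hMdef
  have hTle : (T:ℝ) ≤ (N:ℝ)^t := Nat.floor_le (by positivity)
  have hMle : (M:ℝ) ≤ (N:ℝ)^m := Nat.floor_le (by positivity)
  have hNt : (N:ℝ)^t ≤ (N:ℝ)^(m+t) := Real.rpow_le_rpow_of_exponent_le hN1 (by linarith)
  have hmul : (N:ℝ)^m * (N:ℝ)^t = (N:ℝ)^(m+t) := (Real.rpow_add hNR m t).symm
  have hsum : T + M*(T-1) ≤ T + M*T :=
    Nat.add_le_add_left (Nat.mul_le_mul le_rfl (Nat.sub_le T 1)) T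
  have hsumR : ((T + M*T : ℕ) : ℝ) ≤ 2 * (N:ℝ)^(m+t) := by
    push_cast
    have hMT : (M:ℝ) * T ≤ (N:ℝ)^m * (N:ℝ)^t :=
      mul_le_mul hMle hTle (by positivity) (by positivity)
    linarith [hMT, hTle, hNt, hmul.le, hmul.ge]
  have hhalf : 2 * (N:ℝ)^(m+t) ≤ (N:ℝ)/2 := by linarith
  have hsumN : T + M*(T-1) ≤ N := by
    have : ((T + M*(T-1) : ℕ) : ℝ) ≤ (N:ℝ) := by
      calc ((T + M*(T-1) : ℕ) : ℝ) ≤ ((T + M*T : ℕ) : ℝ) := by exact_mod_cast hsum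
        _ ≤ 2 * (N:ℝ)^(m+t) := hsumR
        _ ≤ (N:ℝ) := by linarith
    exact_mod_cast this
  set B := N - T - M*(T-1) with hBdef
  have hB : B = N - (T + M*(T-1)) := Nat.sub_sub N T (M*(T-1))
  have hBcast : (B:ℝ) = (N:ℝ) - ((T + M*(T-1) : ℕ) : ℝ) := by
    rw [hB, Nat.cast_sub hsumN]
  have hNmB : (N:ℝ) - (B:ℝ) ≤ 2 * (N:ℝ)^(m+t) := by
    rw [hBcast]
    have : ((T + M*(T-1) : ℕ) : ℝ) ≤ ((T + M*T : ℕ) : ℝ) := by exact_mod_cast hsum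
    linarith
  have hBge : (N:ℝ)/2 ≤ (B:ℝ) := by linarith
  have hN4 : (4:ℝ) ≤ N := by linarith
  have hB1R : (1:ℝ) ≤ (B:ℝ) := by linarith
  have hB1 : 1 ≤ B := by exact_mod_cast hB1R
  refine ⟨hB1, ?_⟩
  -- construction of an element of the set close to B
  set x := (B:ℝ)^(1/γ) with hxdef
  have hB0 : (0:ℝ) ≤ (B:ℝ) := by linarith
  have hx1 : (1:ℝ) ≤ x := Real.one_le_rpow hB1R (by positivity)
  have hxpos : (0:ℝ) < x := by linarith
  set K := ⌊x⌋₊ with hKdef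
  have hK1 : 1 ≤ K := Nat.le_floor (by exact_mod_cast hx1)
  have hKx : (K:ℝ) ≤ x := Nat.floor_le hxpos.le
  have hxK : x - 1 < (K:ℝ) := Nat.sub_one_lt_floor x
  have hxγ : x^γ = (B:ℝ) := by
    rw [hxdef, ← Real.rpow_mul hB0, one_div_mul_cancel (ne_of_gt hγ0), Real.rpow_one]
  have hxγ1 : x^(γ-1) = (B:ℝ)^(1-1/γ) := by
    rw [hxdef, ← Real.rpow_mul hB0]
    congr 1
    field_simp
  have hKR1 : (1:ℝ) ≤ (K:ℝ) := by exact_mod_cast hK1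
  -- n := ⌊K^γ⌋ belongs to the set
  set n := ⌊(K:ℝ)^γ⌋₊ with hndef
  have hn1 : 1 ≤ n := Nat.le_floor (by
    have : (1:ℝ) ≤ (K:ℝ)^γ := Real.one_le_rpow hKR1 hγ0.le
    exact_mod_cast this)
  have hKγB : (K:ℝ)^γ ≤ (B:ℝ) := by
    calc (K:ℝ)^γ ≤ x^γ := Real.rpow_le_rpow (by positivity) hKx hγ0.le
      _ = (B:ℝ) := hxγ
  have hnB : n ≤ B := by
    have := Nat.floor_le_floor hKγB
    rwa [Nat.floor_natCast] at this
  set S := {k ∈ NgammaSet γ | k ≤ B} with hSdef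
  have hmem : n ∈ S := ⟨⟨by omega, ⟨K, rfl⟩⟩, hnB⟩
  have hbdd : BddAbove S := ⟨B, fun s hs => hs.2⟩
  have hle1 : n ≤ sSup S := le_csSup hbdd hmem
  have hle1R : (n:ℝ) ≤ ((sSup S : ℕ) : ℝ) := by exact_mod_cast hle1
  -- lower bound on n
  have hfloorn : (K:ℝ)^γ - 1 < (n:ℝ) := Nat.sub_one_lt_floor _
  have hKlow : (x-1)^γ ≤ (K:ℝ)^γ := Real.rpow_le_rpow (by linarith) hxK.le hγ0.le
  -- Bernoulli: (x-1)^γ ≥ x^γ - γ x^(γ-1)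
  have h1x : (0:ℝ) ≤ 1 - 1/x := by
    have : 1/x ≤ 1 := by rw [div_le_one hxpos]; exact hx1
    linarith
  have hbern : 1 + γ * (-(1/x)) ≤ (1 + -(1/x)) ^ γ :=
    one_add_mul_self_le_rpow_one_add (by
      have : 1/x ≤ 1 := by rw [div_le_one hxpos]; exact hx1
      linarith) hγ.le
  have hfact : x - 1 = x * (1 - 1/x) := by field_simp
  have hmulr : (x*(1-1/x))^γ = x^γ * (1-1/x)^γ := Real.mul_rpow hxpos.le h1x
  have hdiv : x^γ / x = x^(γ-1) := by
    rw [Real.rpow_sub hxpos, Real.rpow_one]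
  have hxγpos : (0:ℝ) < x^γ := Real.rpow_pos_of_pos hxpos γ
  have hbern2 : x^γ - γ * x^(γ-1) ≤ (x-1)^γ := by
    have h1 : x^γ * (1 - γ/x) ≤ x^γ * (1-1/x)^γ := by
      apply mul_le_mul_of_nonneg_left _ hxγpos.le
      have : (1:ℝ) + -(1/x) = 1 - 1/x := by ring
      rw [this] at hbern
      calc 1 - γ/x = 1 + γ * (-(1/x)) := by ring
        _ ≤ (1 - 1/x)^γ := hbern
    have h2 : x^γ * (1 - γ/x) = x^γ - γ * x^(γ-1) := by
      rw [← hdiv]; field_simp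
    rw [hfact, hmulr]
    linarith [h1, h2.symm.le]
  have hBNle : (B:ℝ) ≤ (N:ℝ) := by
    have : B ≤ N := by rw [hB]; exact Nat.sub_le N _
    exact_mod_cast this
  have hBNexp : (B:ℝ)^(1-1/γ) ≤ (N:ℝ)^(1-1/γ) := Real.rpow_le_rpow hB0 hBNle hexp.le
  have hnlow : (B:ℝ) - γ*(N:ℝ)^(1-1/γ) - 1 ≤ (n:ℝ) := by
    have hγN : γ * (B:ℝ)^(1-1/γ) ≤ γ * (N:ℝ)^(1-1/γ) :=
      mul_le_mul_of_nonneg_left hBNexp hγ0.le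
    rw [hxγ, hxγ1] at hbern2
    linarith [hbern2, hKlow, hfloorn]
  have hA1 : (1:ℝ) ≤ (N:ℝ)^(1-1/γ) := Real.one_le_rpow hN1 hexp.le
  have hkey : γ*(N:ℝ)^(1-1/γ) + 1 + 2*(N:ℝ)^(m+t)
      ≤ (γ+2)*((N:ℝ)^(1-1/γ) + (N:ℝ)^(m+t)) := by
    have hγP : 0 ≤ γ * (N:ℝ)^(m+t) := mul_nonneg hγ0.le (by positivity)
    have hexpand : (γ+2)*((N:ℝ)^(1-1/γ) + (N:ℝ)^(m+t))
        = γ*(N:ℝ)^(1-1/γ) + γ*(N:ℝ)^(m+t) + 2*(N:ℝ)^(1-1/γ) + 2*(N:ℝ)^(m+t) := by ring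
    linarith [hγP, hA1, hPmt, hexpand.le, hexpand.ge]
  linarith [hle1R, hnlow, hNmB, hkey]
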